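/- arXiv:2110.03720 — 2 statements merged into one kernel-verified Lean document; each statement's English description precedes it below -/
import Mathlib

section
/- Let 𝒳, 𝒴 be standard Borel spaces and Q : 𝒳 → 𝒫(𝒴) a measurement kernel. Suppose that for every continuous bounded f : 𝒳 → ℝ and every ε > 0 there is a bounded measurable g : 𝒴 → ℝ with sup_x |f(x) − ∫ g(y) Q(dy|x)| < ε (one-step observability). Let (πₙ), (σₙ) be sequences of probability measures on 𝒳 such that the induced measurement predictions merge in total variation: ‖∫Q(·|x)πₙ(dx) − ∫Q(·|x)σₙ(dx)‖_TV → 0. Then πₙ and σₙ merge weakly: for every continuous bounded f, ∫f dπₙ − ∫f dσₙ → 0. -/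
open MeasureTheory

/-- Bound on the difference of integrals of a bounded measurable function against two
finite measures in terms of the total variation of their difference. -/
lemma abs_integral_sub_le_tv {α : Type*} [MeasurableSpace α]
    (μ ν : Measure α) [IsFiniteMeasure μ] [IsFiniteMeasure ν]
    {g : α → ℝ} (hg : Measurable g) {C : ℝ} (hC : ∀ y, |g y| ≤ C) :
    |∫ y, g y ∂μ - ∫ y, g y ∂ν| ≤
      C * ((μ.toSignedMeasure - ν.toSignedMeasure).totalVariation Set.univ).toReal := by
  set s := μ.toSignedMeasure - ν.toSignedMeasure with hs
  set p := s.toJordanDecomposition.posPart with hp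
  set q := s.toJordanDecomposition.negPart with hq
  have hjd : p.toSignedMeasure - q.toSignedMeasure = s :=
    s.toSignedMeasure_toJordanDecomposition
  have hmeq : μ + q = ν + p := by
    rw [← Measure.toSignedMeasure_eq_toSignedMeasure_iff,
      Measure.toSignedMeasure_add, Measure.toSignedMeasure_add]
    have : μ.toSignedMeasure - ν.toSignedMeasure
        = p.toSignedMeasure - q.toSignedMeasure := by rw [hjd]
    abel_nf
    abel_nf at this
    linear_combination (norm := abel_nf) this
  have hint : ∀ (ρ : Measure α) [IsFiniteMeasure ρ], Integrable g ρ := by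
    intro ρ _
    exact (integrable_const C).mono' hg.aestronglyMeasurable
      (Filter.Eventually.of_forall fun y => by simpa using hC y)
  have key : ∫ y, g y ∂μ - ∫ y, g y ∂ν = ∫ y, g y ∂p - ∫ y, g y ∂q := by
    have h1 : ∫ y, g y ∂(μ + q) = ∫ y, g y ∂(ν + p) := by rw [hmeq]
    rw [integral_add_measure (hint μ) (hint q),
      integral_add_measure (hint ν) (hint p)] at h1
    linarith
  have hbp : |∫ y, g y ∂p| ≤ C * (p Set.univ).toReal := by
    simpa [Measure.real] using norm_integral_le_of_norm_le_const
      (μ := p) (f := g) (Filter.Eventually.of_forall fun y => by simpa using hC y)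
  have hbq : |∫ y, g y ∂q| ≤ C * (q Set.univ).toReal := by
    simpa [Measure.real] using norm_integral_le_of_norm_le_const
      (μ := q) (f := g) (Filter.Eventually.of_forall fun y => by simpa using hC y)
  have htv : (s.totalVariation Set.univ).toReal
      = (p Set.univ).toReal + (q Set.univ).toReal := by
    rw [SignedMeasure.totalVariation, Measure.add_apply,
      ENNReal.toReal_add (measure_ne_top _ _) (measure_ne_top _ _)]
  rw [key, htv]
  calc |∫ y, g y ∂p - ∫ y, g y ∂q| ≤ |∫ y, g y ∂p| + |∫ y, g y ∂q| := abs_sub _ _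
    _ ≤ C * (p Set.univ).toReal + C * (q Set.univ).toReal := add_le_add hbp hbq
    _ = C * ((p Set.univ).toReal + (q Set.univ).toReal) := by ring

theorem one_step_observability_implies_weak_merging
    {X Y : Type*} [MeasurableSpace X] [TopologicalSpace X] [BorelSpace X] [PolishSpace X]
    [MeasurableSpace Y] [TopologicalSpace Y] [BorelSpace Y] [PolishSpace Y]
    (Q : ProbabilityTheory.Kernel X Y) [ProbabilityTheory.IsMarkovKernel Q]
    (hobs : ∀ f : BoundedContinuousFunction X ℝ, ∀ ε > (0 : ℝ),
      ∃ g : Y → ℝ, Measurable g ∧ (∃ C, ∀ y, |g y| ≤ C) ∧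
        ∀ x, |f x - ∫ y, g y ∂(Q x)| < ε)
    (π σ : ℕ → Measure X)
    (hπ : ∀ n, IsProbabilityMeasure (π n)) (hσ : ∀ n, IsProbabilityMeasure (σ n))
    (hTV : Filter.Tendsto
      (fun n => ((((π n).compProd Q).snd).toSignedMeasure
        - (((σ n).compProd Q).snd).toSignedMeasure).totalVariation Set.univ)
      Filter.atTop (nhds 0)) :
    ∀ f : BoundedContinuousFunction X ℝ,
      Filter.Tendsto (fun n => ∫ x, f x ∂(π n) - ∫ x, f x ∂(σ n))
        Filter.atTop (nhds 0) := by
  intro f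
  rw [Metric.tendsto_atTop]
  intro ε hε
  have hε3 : (0:ℝ) < ε / 3 := by linarith
  obtain ⟨g, hgm, ⟨C, hC⟩, happ⟩ := hobs f (ε / 3) hε3
  -- the predicted observation function
  set G : X → ℝ := fun x => ∫ y, g y ∂(Q x) with hG
  have hGsm : StronglyMeasurable G := by
    have : StronglyMeasurable (fun z : X × Y => g z.2) :=
      (hgm.comp measurable_snd).stronglyMeasurable
    exact this.integral_kernel_prod_right'
  have hGbd : ∀ x, |G x| ≤ C := by
    intro x
    calc |G x| = ‖∫ y, g y ∂(Q x)‖ := rfl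
      _ ≤ C * ((Q x) Set.univ).toReal := norm_integral_le_of_norm_le_const
          (Filter.Eventually.of_forall fun y => by simpa using hC y)
      _ = C := by simp
  -- integrals of G against π n / σ n equal integrals of g against the predictions
  have hGint : ∀ (μ : Measure X) [IsProbabilityMeasure μ],
      ∫ x, G x ∂μ = ∫ y, g y ∂((μ.compProd Q).snd) := by
    intro μ _
    have hig : Integrable (fun z : X × Y => g z.2) (μ.compProd Q) :=
      (integrable_const C).mono'
        ((hgm.comp measurable_snd).aestronglyMeasurable)
        (Filter.Eventually.of_forall fun z => by simpa using hC z.2)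
    rw [Measure.snd, integral_map measurable_snd.aemeasurable hgm.aestronglyMeasurable,
      Measure.integral_compProd hig]
  -- bound the third term via total variation
  have hbound : ∀ n, |∫ x, G x ∂(π n) - ∫ x, G x ∂(σ n)| ≤
      C * (((((π n).compProd Q).snd).toSignedMeasure
        - (((σ n).compProd Q).snd).toSignedMeasure).totalVariation Set.univ).toReal := by
    intro n
    haveI := hπ n; haveI := hσ n
    rw [hGint (π n), hGint (σ n)]
    exact abs_integral_sub_le_tv _ _ hgm hC
  -- the total variation term tends to 0
  have htv0 : Filter.Tendsto (fun n =>
      C * (((((π n).compProd Q).snd).toSignedMeasure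
        - (((σ n).compProd Q).snd).toSignedMeasure).totalVariation Set.univ).toReal)
      Filter.atTop (nhds 0) := by
    have h1 : Filter.Tendsto (fun n =>
        (((((π n).compProd Q).snd).toSignedMeasure
          - (((σ n).compProd Q).snd).toSignedMeasure).totalVariation Set.univ).toReal)
        Filter.atTop (nhds 0) := by
      have := (ENNReal.tendsto_toReal (a := 0) (by simp)).comp hTV
      simpa [Function.comp_def] using this
    simpa using h1.const_mul C
  have hev : ∀ᶠ n in Filter.atTop,
      C * (((((π n).compProd Q).snd).toSignedMeasure
        - (((σ n).compProd Q).snd).toSignedMeasure).totalVariation Set.univ).toReal < ε / 3 :=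
    htv0.eventually_lt_const hε3
  obtain ⟨N, hN⟩ := Filter.eventually_atTop.mp hev
  refine ⟨N, fun n hn => ?_⟩
  haveI := hπ n; haveI := hσ n
  have hfG : ∀ (μ : Measure X) [IsProbabilityMeasure μ],
      |∫ x, f x ∂μ - ∫ x, G x ∂μ| ≤ ε / 3 := by
    intro μ _
    have hGi : Integrable G μ :=
      (integrable_const C).mono' hGsm.aestronglyMeasurable
        (Filter.Eventually.of_forall fun x => by simpa using hGbd x)
    rw [← integral_sub (f.integrable μ) hGi]
    calc |∫ x, (f x - G x) ∂μ| = ‖∫ x, (f x - G x) ∂μ‖ := rfl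
      _ ≤ (ε / 3) * (μ Set.univ).toReal := norm_integral_le_of_norm_le_const
          (Filter.Eventually.of_forall fun x => by simpa using (happ x).le)
      _ = ε / 3 := by simp
  have h3 := (hbound n).trans_lt (hN n hn)
  have h1 := hfG (π n)
  have h2 := hfG (σ n)
  rw [Real.dist_eq, sub_zero]
  have : ∫ x, f x ∂(π n) - ∫ x, f x ∂(σ n)
      = (∫ x, f x ∂(π n) - ∫ x, G x ∂(π n)) - (∫ x, f x ∂(σ n) - ∫ x, G x ∂(σ n))
        + (∫ x, G x ∂(π n) - ∫ x, G x ∂(σ n)) := by ring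
  rw [this]
  calc |(∫ x, f x ∂(π n) - ∫ x, G x ∂(π n)) - (∫ x, f x ∂(σ n) - ∫ x, G x ∂(σ n))
        + (∫ x, G x ∂(π n) - ∫ x, G x ∂(σ n))|
      ≤ |∫ x, f x ∂(π n) - ∫ x, G x ∂(π n)| + |∫ x, f x ∂(σ n) - ∫ x, G x ∂(σ n)|
        + |∫ x, G x ∂(π n) - ∫ x, G x ∂(σ n)| :=
        (abs_add_le _ _).trans (add_le_add_left (abs_sub _ _) _)
    _ < ε / 3 + ε / 3 + ε / 3 := by
        have := h3; have := h1; have := h2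
        linarith [abs_nonneg (∫ x, G x ∂(π n) - ∫ x, G x ∂(σ n))]
    _ = ε := by ring
end

section
/- Let T(dx₁|x, u) = t(x₁, x, u) φ(dx₁) be a transition kernel with density t with respect to a σ-finite measure φ, where t(x₁, ·, u) is continuous in x for every x₁ and u, and t is φ-integrable appropriately. Fix u. If a sequence of probability measures πᵐ converges weakly to π on 𝒳, then the predicted measures ∫ T(·|x, u) πᵐ(dx) converge to ∫ T(·|x, u) π(dx) in total variation. -/
open MeasureTheory

theorem time_update_tv_continuous
    {X U : Type*} [MeasurableSpace X] [TopologicalSpace X] [BorelSpace X] [PolishSpace X]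
    (φ : Measure X) [SigmaFinite φ] (t : X → X → U → ℝ)
    (ht0 : ∀ x₁ x u, 0 ≤ t x₁ x u)
    (htmeas : ∀ x u, Measurable (fun x₁ => t x₁ x u))
    (htc : ∀ x₁ u, Continuous (fun x => t x₁ x u))
    (htb : ∀ x₁ u, ∃ C, ∀ x, t x₁ x u ≤ C)
    (hti : ∀ x u, ∫⁻ x₁, ENNReal.ofReal (t x₁ x u) ∂φ = 1)
    (u : U) (πm : ℕ → Measure X) (π : Measure X)
    [∀ m, IsProbabilityMeasure (πm m)] [IsProbabilityMeasure π]
    (hconv : ∀ f : BoundedContinuousFunction X ℝ,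
      Filter.Tendsto (fun m => ∫ x, f x ∂(πm m)) Filter.atTop (nhds (∫ x, f x ∂π))) :
    Filter.Tendsto
      (fun m => ∫ x₁, |(∫ x, t x₁ x u ∂(πm m)) - ∫ x, t x₁ x u ∂π| ∂φ)
      Filter.atTop (nhds 0) := by
  letI := TopologicalSpace.upgradeIsCompletelyMetrizable X
  -- joint measurability
  have hjoint : Measurable (Function.uncurry fun x₁ x => t x₁ x u) := by
    have h1 : Measurable (Function.uncurry fun x x₁ => t x₁ x u) :=
      measurable_uncurry_of_continuous_of_measurable (fun x₁ => htc x₁ u) (fun x => htmeas x u)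
    exact h1.comp measurable_swap
  -- bounded continuous function for each x₁
  have hbcf : ∀ x₁, ∃ g : BoundedContinuousFunction X ℝ, ∀ x, g x = t x₁ x u := by
    intro x₁
    obtain ⟨C, hC⟩ := htb x₁ u
    refine ⟨BoundedContinuousFunction.ofNormedAddCommGroup (fun x => t x₁ x u) (htc x₁ u) C
      (fun x => ?_), fun x => rfl⟩
    rw [Real.norm_eq_abs, abs_of_nonneg (ht0 x₁ x u)]
    exact hC x
  choose g hg using hbcf
  -- key facts for an arbitrary probability measure μ
  have key : ∀ (μ : Measure X) [IsProbabilityMeasure μ],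
      Integrable (fun x₁ => ∫ x, t x₁ x u ∂μ) φ ∧
      ∫ x₁, (∫ x, t x₁ x u ∂μ) ∂φ = 1 := by
    intro μ hμ
    have hmeas : Measurable (fun x₁ => ∫ x, t x₁ x u ∂μ) :=
      (hjoint.stronglyMeasurable.integral_prod_right').measurable
    have hint : ∀ x₁, Integrable (fun x => t x₁ x u) μ := by
      intro x₁
      exact ((g x₁).integrable μ).congr (Filter.Eventually.of_forall fun x => hg x₁ x)
    have hof : ∀ x₁, ENNReal.ofReal (∫ x, t x₁ x u ∂μ) = ∫⁻ x, ENNReal.ofReal (t x₁ x u) ∂μ := by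
      intro x₁
      exact MeasureTheory.ofReal_integral_eq_lintegral_ofReal (hint x₁)
        (Filter.Eventually.of_forall fun x => ht0 x₁ x u)
    have hswap : ∫⁻ x₁, ∫⁻ x, ENNReal.ofReal (t x₁ x u) ∂μ ∂φ = 1 := by
      rw [lintegral_lintegral_swap]
      · simp_rw [hti _ u]
        simp
      · exact (ENNReal.measurable_ofReal.comp hjoint).aemeasurable
    have hlint : ∫⁻ x₁, ENNReal.ofReal (∫ x, t x₁ x u ∂μ) ∂φ = 1 := by
      simp_rw [hof]; exact hswap
    have hnn : 0 ≤ᵐ[φ] fun x₁ => ∫ x, t x₁ x u ∂μ :=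
      Filter.Eventually.of_forall fun x₁ =>
        integral_nonneg fun x => ht0 x₁ x u
    have hInt : Integrable (fun x₁ => ∫ x, t x₁ x u ∂μ) φ := by
      refine ⟨hmeas.aestronglyMeasurable, ?_⟩
      rw [hasFiniteIntegral_iff_ofReal hnn, hlint]
      exact ENNReal.one_lt_top
    refine ⟨hInt, ?_⟩
    rw [integral_eq_lintegral_of_nonneg_ae hnn hmeas.aestronglyMeasurable, hlint]
    simp
  set f : X → ℝ := fun x₁ => ∫ x, t x₁ x u ∂π with hf
  set F : ℕ → X → ℝ := fun m x₁ => ∫ x, t x₁ x u ∂(πm m) with hF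
  obtain ⟨hfInt, hfI⟩ := key π
  have hFInt : ∀ m, Integrable (F m) φ := fun m => (key (πm m)).1
  have hFI : ∀ m, ∫ x₁, F m x₁ ∂φ = 1 := fun m => (key (πm m)).2
  -- pointwise convergence
  have hpt : ∀ x₁, Filter.Tendsto (fun m => F m x₁) Filter.atTop (nhds (f x₁)) := by
    intro x₁
    have := hconv (g x₁)
    simpa [hg x₁, hF, hf] using this
  -- positive parts
  set G : ℕ → X → ℝ := fun m x₁ => max (f x₁ - F m x₁) 0 with hG
  have hGle : ∀ m x₁, G m x₁ ≤ f x₁ := by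
    intro m x₁
    have h1 : F m x₁ ≥ 0 := integral_nonneg fun x => ht0 x₁ x u
    have h2 : f x₁ ≥ 0 := integral_nonneg fun x => ht0 x₁ x u
    simp only [hG, max_le_iff]
    constructor <;> linarith
  have hGnn : ∀ m x₁, 0 ≤ G m x₁ := fun m x₁ => le_max_right _ _
  have hGInt : ∀ m, Integrable (G m) φ := fun m => (hfInt.sub (hFInt m)).pos_part
  have hGtend : ∀ x₁, Filter.Tendsto (fun m => G m x₁) Filter.atTop (nhds 0) := by
    intro x₁
    have : Filter.Tendsto (fun m => f x₁ - F m x₁) Filter.atTop (nhds 0) := by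
      have := (hpt x₁).const_sub (f x₁)
      simpa using this
    have h2 : Filter.Tendsto (fun m => max (f x₁ - F m x₁) 0) Filter.atTop
        (nhds (max (0:ℝ) 0)) := this.max tendsto_const_nhds
    simpa using h2
  -- dominated convergence
  have hdom : Filter.Tendsto (fun m => ∫ x₁, G m x₁ ∂φ) Filter.atTop (nhds 0) := by
    have h0 : (0:ℝ) = ∫ x₁, (0:ℝ) ∂φ := by simp
    rw [h0]
    refine tendsto_integral_of_dominated_convergence f (fun m => (hGInt m).1) hfInt ?_ ?_
    · intro m
      refine Filter.Eventually.of_forall fun x₁ => ?_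
      rw [Real.norm_eq_abs, abs_of_nonneg (hGnn m x₁)]
      exact hGle m x₁
    · exact Filter.Eventually.of_forall fun x₁ => hGtend x₁
  -- |F m - f| = 2 G m - (f - F m)
  have habs : ∀ m, (fun x₁ => |F m x₁ - f x₁|) = fun x₁ => 2 * G m x₁ - (f x₁ - F m x₁) := by
    intro m
    funext x₁
    rcases le_total (F m x₁) (f x₁) with h | h
    · rw [abs_of_nonpos (by linarith), hG]
      simp only [max_eq_left (by linarith : (0:ℝ) ≤ f x₁ - F m x₁)]
      ring
    · rw [abs_of_nonneg (by linarith), hG]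
      simp only [max_eq_right (by linarith : f x₁ - F m x₁ ≤ (0:ℝ))]
      ring
  have hInteq : ∀ m, ∫ x₁, |F m x₁ - f x₁| ∂φ = 2 * ∫ x₁, G m x₁ ∂φ := by
    intro m
    rw [habs m]
    have hsub : Integrable (fun x₁ => f x₁ - F m x₁) φ := hfInt.sub (hFInt m)
    have hmul : Integrable (fun x₁ => 2 * G m x₁) φ := (hGInt m).const_mul 2
    rw [integral_sub hmul hsub, integral_const_mul, integral_sub hfInt (hFInt m), hfI, hFI m]
    ring
  rw [show (fun m => ∫ x₁, |(∫ x, t x₁ x u ∂(πm m)) - ∫ x, t x₁ x u ∂π| ∂φ) = fun m => 2 * ∫ x₁, G m x₁ ∂φ from funext hInteq]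
  have := hdom.const_mul (2:ℝ)
  simpa using this
end
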